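/- arXiv:2203.13567 — 2 statements merged into one kernel-verified Lean document; each statement's English description precedes it below -/
import Mathlib

section
/- Let $f : \mathbb{R} \to \mathbb{R}$ be differentiable. Then for all $x, y \in \mathbb{R}$ with $y \neq 0$, the kernel identity $\frac{\partial}{\partial x}\left(\frac{f(x)-f(x-y) - y f'(x-y)}{y^2 + (f(x)-f(x-y))^2}\right) = \frac{\partial}{\partial y}\left(\frac{-y\,(f'(x)-f'(x-y))}{y^2 + (f(x)-f(x-y))^2}\right)$ holds, provided $f$ is twice differentiable at the relevant points. -/
theorem kernel_identity_A (f : ℝ → ℝ) (hf : Differentiable ℝ f)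
    (hf' : Differentiable ℝ (deriv f)) :
    ∀ x y : ℝ, y ≠ 0 →
      deriv (fun t => (f t - f (t - y) - y * deriv f (t - y)) /
          (y ^ 2 + (f t - f (t - y)) ^ 2)) x
        = deriv (fun u => (-(u * (deriv f x - deriv f (x - u)))) /
          (u ^ 2 + (f x - f (x - u)) ^ 2)) y := by
  intro x y hy
  have hD : y ^ 2 + (f x - f (x - y)) ^ 2 ≠ 0 := by positivity
  -- left side
  have h1 : HasDerivAt f (deriv f x) x := (hf x).hasDerivAt
  have hsub : HasDerivAt (fun t : ℝ => t - y) 1 x := (hasDerivAt_id x).sub_const y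
  have h2 : HasDerivAt (fun t => f (t - y)) (deriv f (x - y)) x := by
    simpa [Function.comp_def] using (hf (x - y)).hasDerivAt.comp x hsub
  have h3 : HasDerivAt (fun t => deriv f (t - y)) (deriv (deriv f) (x - y)) x := by
    simpa [Function.comp_def] using (hf' (x - y)).hasDerivAt.comp x hsub
  have hNum : HasDerivAt (fun t => f t - f (t - y) - y * deriv f (t - y))
      (deriv f x - deriv f (x - y) - y * deriv (deriv f) (x - y)) x :=
    (h1.sub h2).sub (h3.const_mul y)
  have hDen : HasDerivAt (fun t => y ^ 2 + (f t - f (t - y)) ^ 2)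
      (2 * (f x - f (x - y)) * (deriv f x - deriv f (x - y))) x := by
    have := ((h1.sub h2).pow 2).const_add (y ^ 2)
    exact this.congr_deriv (by norm_num)
  have hL := (hNum.div hDen hD).deriv
  -- right side
  have hsub2 : HasDerivAt (fun u : ℝ => x - u) (-1) y := (hasDerivAt_id y).const_sub x
  have k1 : HasDerivAt (fun u => f (x - u)) (-deriv f (x - y)) y := by
    simpa [Function.comp_def] using (hf (x - y)).hasDerivAt.comp y hsub2
  have k2 : HasDerivAt (fun u => deriv f (x - u)) (-deriv (deriv f) (x - y)) y := by
    simpa [Function.comp_def] using (hf' (x - y)).hasDerivAt.comp y hsub2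
  have kNum : HasDerivAt (fun u => -(u * (deriv f x - deriv f (x - u))))
      (-((deriv f x - deriv f (x - y)) + y * deriv (deriv f) (x - y))) y := by
    have := ((hasDerivAt_id y).mul ((hasDerivAt_const y (deriv f x)).sub k2)).neg
    exact this.congr_deriv (by simp)
  have kDen : HasDerivAt (fun u => u ^ 2 + (f x - f (x - u)) ^ 2)
      (2 * y + 2 * (f x - f (x - y)) * deriv f (x - y)) y := by
    have := ((hasDerivAt_id y).pow 2).add
      (((hasDerivAt_const y (f x)).sub k1).pow 2)
    exact this.congr_deriv (by simp)
  have hR := (kNum.div kDen hD).deriv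
  simp only [Pi.div_def] at hL hR; rw [hL, hR]
  field_simp
  ring
end

section
/- Let $f : \mathbb{R} \to \mathbb{R}$ be twice differentiable. Then for all $x, y \in \mathbb{R}$ with $y \neq 0$, one has $\frac{\partial}{\partial x}\left(\frac{y + f'(x-y)(f(x)-f(x-y))}{y^2 + (f(x)-f(x-y))^2}\right) = \frac{\partial}{\partial y}\left(\frac{(f(x)-f(x-y))(f'(x)-f'(x-y))}{y^2 + (f(x)-f(x-y))^2}\right)$. -/
theorem kernel_identity_B (f : ℝ → ℝ) (hf : Differentiable ℝ f)
    (hf' : Differentiable ℝ (deriv f)) :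
    ∀ x y : ℝ, y ≠ 0 →
      deriv (fun t => (y + deriv f (t - y) * (f t - f (t - y))) /
          (y ^ 2 + (f t - f (t - y)) ^ 2)) x
        = deriv (fun u => ((f x - f (x - u)) * (deriv f x - deriv f (x - u))) /
          (u ^ 2 + (f x - f (x - u)) ^ 2)) y := by
  intro x y hy
  set g := deriv f with hg
  have hne : y ^ 2 + (f x - f (x - y)) ^ 2 ≠ 0 := by positivity
  -- LHS derivatives
  have hsub : HasDerivAt (fun t : ℝ => t - y) 1 x := (hasDerivAt_id x).sub_const y
  have hfxy : HasDerivAt (fun t => f (t - y)) (g (x - y) * 1) x :=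
    (hf.differentiableAt.hasDerivAt).comp x hsub
  have hd : HasDerivAt (fun t => f t - f (t - y)) (g x - g (x - y) * 1) x :=
    (hf.differentiableAt.hasDerivAt).sub hfxy
  have hgt : HasDerivAt (fun t => g (t - y)) (deriv g (x - y) * 1) x :=
    (hf'.differentiableAt.hasDerivAt).comp x hsub
  have hnum : HasDerivAt (fun t => y + g (t - y) * (f t - f (t - y)))
      (deriv g (x - y) * 1 * (f x - f (x - y)) + g (x - y) * (g x - g (x - y) * 1)) x :=
    (hgt.mul hd).const_add y
  have hden : HasDerivAt (fun t => y ^ 2 + (f t - f (t - y)) ^ 2)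
      ((2 : ℕ) * (f x - f (x - y)) ^ 1 * (g x - g (x - y) * 1)) x :=
    (hd.pow 2).const_add (y ^ 2)
  have hL := ((hnum.div hden hne).deriv)
  -- RHS derivatives
  have hsub2 : HasDerivAt (fun u : ℝ => x - u) (-1) y := (hasDerivAt_id y).const_sub x
  have hfxu : HasDerivAt (fun u => f (x - u)) (g (x - y) * (-1)) y :=
    (hf.differentiableAt.hasDerivAt).comp y hsub2
  have hd2 : HasDerivAt (fun u => f x - f (x - u)) (-(g (x - y) * (-1))) y :=
    hfxu.const_sub (f x)
  have hgu : HasDerivAt (fun u => g (x - u)) (deriv g (x - y) * (-1)) y :=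
    (hf'.differentiableAt.hasDerivAt).comp y hsub2
  have hg2 : HasDerivAt (fun u => g x - g (x - u)) (-(deriv g (x - y) * (-1))) y :=
    hgu.const_sub (g x)
  have hnum2 : HasDerivAt (fun u => (f x - f (x - u)) * (g x - g (x - u)))
      (-(g (x - y) * (-1)) * (g x - g (x - y)) + (f x - f (x - y)) * -(deriv g (x - y) * (-1))) y :=
    hd2.mul hg2
  have hden2 : HasDerivAt (fun u => u ^ 2 + (f x - f (x - u)) ^ 2)
      ((2 : ℕ) * y ^ 1 + (2 : ℕ) * (f x - f (x - y)) ^ 1 * -(g (x - y) * (-1))) y :=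
    (hasDerivAt_pow 2 y).add (hd2.pow 2)
  have hR := ((hnum2.div hden2 hne).deriv)
  simp only [Pi.div_def] at hL hR
  rw [hL, hR]
  field_simp
  ring
end
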